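/- Let X be a measurable space equipped with a σ-finite measure α, and let p, q : X → ℝ≥0 be measurable with ∫ p dα = ∫ q dα = 1; set μ = α.withDensity p and ν = α.withDensity q. Let m = (1/2)•μ + (1/2)•ν be the mixture measure. Then μ ≪ m and ν ≪ m, the Kullback–Leibler divergences klDiv(μ‖m) and klDiv(ν‖m) are finite, and, assuming x ↦ log(p(x)/(p(x)+q(x))) is μ-integrable and x ↦ log(q(x)/(p(x)+q(x))) is ν-integrable, the value of the GAN objective at the optimal discriminator D* = p/(p+q) satisfies ∫ log(p/(p+q)) dμ + ∫ log(q/(p+q)) dν = −log 4 + klDiv(μ‖m) + klDiv(ν‖m), where the KL divergences are taken as real numbers (e.g. via .toReal of the extended-nonnegative-real Kullback–Leibler divergence). -/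

import Mathlib

open MeasureTheory Real
open scoped ENNReal NNReal Classical

/-- The Kullback–Leibler divergence between two measures, valued in the extended
nonnegative reals: it is `∫ llr μ ν dμ` when `μ ≪ ν` and the log-likelihood ratio
`llr μ ν` is `μ`-integrable, and `∞` otherwise. -/
noncomputable def klDiv {X : Type*} [MeasurableSpace X] (μ ν : Measure X) : ℝ≥0∞ :=
  if μ ≪ ν ∧ Integrable (llr μ ν) μ then ENNReal.ofReal (∫ x, llr μ ν x ∂μ) else ⊤

lemma gan_aux {X : Type*} [MeasurableSpace X] (α : Measure X) [SigmaFinite α]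
    (p q : X → ℝ≥0) (hp : Measurable p) (hq : Measurable q)
    (hp1 : ∫⁻ x, (p x : ℝ≥0∞) ∂α = 1) (hq1 : ∫⁻ x, (q x : ℝ≥0∞) ∂α = 1)
    (h3 : Integrable (fun x => log ((p x : ℝ) / ((p x : ℝ) + (q x : ℝ))))
      (α.withDensity fun x => (p x : ℝ≥0∞))) :
    (α.withDensity fun x => (p x : ℝ≥0∞)) ≪
        (((1:ℝ≥0∞)/2) • (α.withDensity fun x => (p x : ℝ≥0∞))
          + ((1:ℝ≥0∞)/2) • (α.withDensity fun x => (q x : ℝ≥0∞))) ∧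
      klDiv (α.withDensity fun x => (p x : ℝ≥0∞))
        (((1:ℝ≥0∞)/2) • (α.withDensity fun x => (p x : ℝ≥0∞))
          + ((1:ℝ≥0∞)/2) • (α.withDensity fun x => (q x : ℝ≥0∞))) ≠ ⊤ ∧
      (klDiv (α.withDensity fun x => (p x : ℝ≥0∞))
        (((1:ℝ≥0∞)/2) • (α.withDensity fun x => (p x : ℝ≥0∞))
          + ((1:ℝ≥0∞)/2) • (α.withDensity fun x => (q x : ℝ≥0∞)))).toReal =
        log 2 + ∫ x, log ((p x : ℝ) / ((p x : ℝ) + (q x : ℝ)))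
          ∂(α.withDensity fun x => (p x : ℝ≥0∞)) := by
  set μ : Measure X := α.withDensity fun x => (p x : ℝ≥0∞) with hμdef
  set ν : Measure X := α.withDensity fun x => (q x : ℝ≥0∞) with hνdef
  set m : Measure X := ((1:ℝ≥0∞)/2) • μ + ((1:ℝ≥0∞)/2) • ν with hmdef
  have hp' : Measurable fun x => (p x : ℝ≥0∞) := hp.coe_nnreal_ennreal
  have hq' : Measurable fun x => (q x : ℝ≥0∞) := hq.coe_nnreal_ennreal
  have hμprob : IsProbabilityMeasure μ := by
    constructor
    rw [hμdef, withDensity_apply _ MeasurableSet.univ, Measure.restrict_univ]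
    exact hp1
  have hνprob : IsProbabilityMeasure ν := by
    constructor
    rw [hνdef, withDensity_apply _ MeasurableSet.univ, Measure.restrict_univ]
    exact hq1
  have hmprob : IsProbabilityMeasure m := by
    constructor
    simp only [hmdef, Measure.add_apply, Measure.smul_apply, smul_eq_mul, measure_univ, mul_one]
    rw [ENNReal.div_add_div_same, one_add_one_eq_two,
      ENNReal.div_self (by norm_num) ENNReal.ofNat_ne_top]
  -- m as a density
  have m_eq : m = α.withDensity (fun x => ((p x : ℝ≥0∞) + q x) / 2) := by
    have hfun : (fun x => ((p x : ℝ≥0∞) + q x) / 2)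
        = (((1:ℝ≥0∞)/2) • fun x => (p x : ℝ≥0∞)) + (((1:ℝ≥0∞)/2) • fun x => (q x : ℝ≥0∞)) := by
      funext x
      simp only [Pi.add_apply, Pi.smul_apply, smul_eq_mul]
      rw [ENNReal.add_div]
      congr 1 <;> simp [ENNReal.div_eq_inv_mul]
    rw [hfun, withDensity_add_right _ (hq'.const_smul _),
      withDensity_smul _ hp', withDensity_smul _ hq']
  -- absolute continuity
  have hμm : μ ≪ m := by
    refine Measure.absolutelyContinuous_of_le_smul (c := 2) ?_
    rw [hmdef, smul_add, smul_smul, show (2:ℝ≥0∞) * (1/2) = 1 by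
      rw [ENNReal.mul_div_cancel two_ne_zero ENNReal.ofNat_ne_top], one_smul]
    exact Measure.le_add_right le_rfl
  -- μ = m.withDensity h
  set h : X → ℝ≥0∞ := fun x => 2 * (p x : ℝ≥0∞) / ((p x : ℝ≥0∞) + q x) with hhdef
  have hh : Measurable h := ((measurable_const.mul hp').div (hp'.add hq'))
  have μ_eq : μ = m.withDensity h := by
    rw [m_eq, ← withDensity_mul _ (f := fun x => ((p x : ℝ≥0∞) + q x) / 2) ((hp'.add hq').div measurable_const) hh, hμdef]
    congr 1
    funext x
    by_cases hc : (p x : ℝ≥0∞) + q x = 0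
    · have hp0 : (p x : ℝ≥0∞) = 0 := by
        simpa using (add_eq_zero.mp hc).1
      simp [hhdef, hc, hp0]
    · have hctop : (p x : ℝ≥0∞) + q x ≠ ⊤ := by
        exact ENNReal.add_ne_top.mpr ⟨ENNReal.coe_ne_top, ENNReal.coe_ne_top⟩
      simp only [Pi.mul_apply, hhdef]
      symm
      calc ((p x : ℝ≥0∞) + q x) / 2 * (2 * (p x : ℝ≥0∞) / ((p x : ℝ≥0∞) + q x))
          = (((p x : ℝ≥0∞) + q x) * ((p x : ℝ≥0∞) + q x)⁻¹) * ((2:ℝ≥0∞)⁻¹ * 2) * (p x : ℝ≥0∞) := by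
            rw [div_eq_mul_inv, div_eq_mul_inv]; ring
        _ = (p x : ℝ≥0∞) := by
            rw [ENNReal.mul_inv_cancel hc hctop,
              ENNReal.inv_mul_cancel (by norm_num) ENNReal.ofNat_ne_top]
            simp
  -- Radon–Nikodym derivative
  have hrn : μ.rnDeriv m =ᵐ[m] h := by
    rw [μ_eq]
    exact Measure.rnDeriv_withDensity m hh
  have hrnμ : μ.rnDeriv m =ᵐ[μ] h := hμm.ae_eq hrn
  -- a.e. positivity of p
  have hset : MeasurableSet {x | p x = 0} := hp (measurableSet_singleton 0)
  have hμ0 : μ {x | p x = 0} = 0 := by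
    rw [hμdef, withDensity_apply _ hset,
      setLIntegral_congr_fun hset (fun x hx => by
        simp only [Set.mem_setOf_eq] at hx
        simp [hx] : Set.EqOn (fun x => ((p x : ℝ≥0∞))) (fun _ => 0) {x | p x = 0})]
    simp
  have hp_pos : ∀ᵐ x ∂μ, p x ≠ 0 := by
    rw [ae_iff]
    simpa using hμ0
  -- llr identification
  have hllr_eq : llr μ m =ᵐ[μ]
      fun x => log 2 + log ((p x : ℝ) / ((p x : ℝ) + (q x : ℝ))) := by
    filter_upwards [hrnμ, hp_pos] with x hx hpx
    have ha : (0:ℝ) < (p x : ℝ) := by positivity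
    have hab : (0:ℝ) < (p x : ℝ) + (q x : ℝ) := by positivity
    rw [llr_def]
    simp only [hx, hhdef]
    rw [ENNReal.toReal_div, ENNReal.toReal_mul]
    simp only [ENNReal.toReal_ofNat, ENNReal.coe_toReal,
      ENNReal.toReal_add ENNReal.coe_ne_top ENNReal.coe_ne_top]
    rw [mul_div_assoc, Real.log_mul two_ne_zero (ne_of_gt (div_pos ha hab))]
  -- integrability of llr
  have hint : Integrable (llr μ m) μ :=
    ((integrable_const (log 2)).add h3).congr hllr_eq.symm
  have hI : ∫ x, llr μ m x ∂μ
      = log 2 + ∫ x, log ((p x : ℝ) / ((p x : ℝ) + (q x : ℝ))) ∂μ := by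
    rw [integral_congr_ae hllr_eq, integral_add (integrable_const _) h3, integral_const]
    simp [measure_univ]
  -- nonnegativity via log t ≥ 1 - 1/t
  set gr : X → ℝ := fun x => ((p x : ℝ) + (q x : ℝ)) / (2 * (p x : ℝ)) with hgrdef
  have hgr_meas : Measurable gr :=
    (hp.coe_nnreal_real.add hq.coe_nnreal_real).div (hp.coe_nnreal_real.const_mul 2)
  have hgr_nonneg : ∀ x, 0 ≤ gr x := fun x => div_nonneg (by positivity) (by positivity)
  have hlint : ∫⁻ x, ENNReal.ofReal (gr x) ∂μ ≤ 1 := by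
    rw [hμdef, lintegral_withDensity_eq_lintegral_mul α hp'
      hgr_meas.ennreal_ofReal]
    have hbound : ∀ x, ((fun x => (p x : ℝ≥0∞)) * fun x => ENNReal.ofReal (gr x)) x
        ≤ ((p x : ℝ≥0∞) + (q x : ℝ≥0∞)) / 2 := by
      intro x
      simp only [Pi.mul_apply]
      by_cases hpx : p x = 0
      · simp [hpx, hgrdef]
      · have ha : (0:ℝ) < (p x : ℝ) := by positivity
        have key : ENNReal.ofReal (gr x) = ((p x : ℝ≥0∞) + (q x : ℝ≥0∞)) / (2 * (p x : ℝ≥0∞)) := by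
          rw [hgrdef, ENNReal.ofReal_div_of_pos (by positivity)]
          congr 1
          · rw [ENNReal.ofReal_add (by positivity) (by positivity)]
            simp
          · rw [ENNReal.ofReal_mul (by norm_num)]
            simp
        rw [key]
        have hpx' : (p x : ℝ≥0∞) ≠ 0 := by simpa using hpx
        rw [div_eq_mul_inv, div_eq_mul_inv,
          ENNReal.mul_inv (Or.inr ENNReal.coe_ne_top) (Or.inl (by norm_num))]
        calc (p x : ℝ≥0∞) * (((p x : ℝ≥0∞) + (q x : ℝ≥0∞)) * ((2:ℝ≥0∞)⁻¹ * ((p x : ℝ≥0∞))⁻¹))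
            = ((p x : ℝ≥0∞) * ((p x : ℝ≥0∞))⁻¹) * (((p x : ℝ≥0∞) + (q x : ℝ≥0∞)) * (2:ℝ≥0∞)⁻¹) := by
              ring
          _ ≤ ((p x : ℝ≥0∞) + (q x : ℝ≥0∞)) * (2:ℝ≥0∞)⁻¹ := by
              rw [ENNReal.mul_inv_cancel hpx' ENNReal.coe_ne_top, one_mul]
    calc ∫⁻ x, ((fun x => (p x : ℝ≥0∞)) * fun x => ENNReal.ofReal (gr x)) x ∂α
        ≤ ∫⁻ x, ((p x : ℝ≥0∞) + (q x : ℝ≥0∞)) / 2 ∂α := lintegral_mono hbound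
      _ = 1 := by
          simp only [ENNReal.div_eq_inv_mul]
          rw [lintegral_const_mul _ (f := fun x => (p x : ℝ≥0∞) + q x) (hp'.add hq'), lintegral_add_left hp', hp1, hq1,
            one_add_one_eq_two, ENNReal.inv_mul_cancel (by norm_num) ENNReal.ofNat_ne_top]
  have hgr_int : Integrable gr μ := by
    refine ⟨hgr_meas.aestronglyMeasurable, ?_⟩
    rw [hasFiniteIntegral_iff_ofReal (ae_of_all _ hgr_nonneg)]
    exact lt_of_le_of_lt hlint ENNReal.one_lt_top
  have hgr_le_one : ∫ x, gr x ∂μ ≤ 1 := by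
    rw [integral_eq_lintegral_of_nonneg_ae (ae_of_all _ hgr_nonneg)
      hgr_meas.aestronglyMeasurable]
    simpa using ENNReal.toReal_mono ENNReal.one_ne_top hlint
  have h_ae_ge : ∀ᵐ x ∂μ, (fun x => 1 - gr x) x ≤ llr μ m x := by
    filter_upwards [hllr_eq, hp_pos] with x hx hpx
    have ha : (0:ℝ) < (p x : ℝ) := by positivity
    have hab : (0:ℝ) < (p x : ℝ) + (q x : ℝ) := by positivity
    have hgrpos : 0 < gr x := by rw [hgrdef]; positivity
    have h1 : Real.log (gr x) ≤ gr x - 1 := Real.log_le_sub_one_of_pos hgrpos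
    have h2 : Real.log (gr x) = -(log 2 + log ((p x : ℝ) / ((p x : ℝ) + (q x : ℝ)))) := by
      rw [show gr x = (2 * (p x : ℝ) / ((p x : ℝ) + (q x : ℝ)))⁻¹ by
          rw [hgrdef]; rw [inv_div], Real.log_inv, mul_div_assoc,
        Real.log_mul two_ne_zero (ne_of_gt (div_pos ha hab))]
    rw [hx]
    linarith
  have h_nonneg : 0 ≤ ∫ x, llr μ m x ∂μ := by
    have hmono' : ∫ x, (1 - gr x) ∂μ ≤ ∫ x, llr μ m x ∂μ :=
      integral_mono_ae ((integrable_const (1:ℝ)).sub hgr_int) hint h_ae_ge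
    rw [integral_sub (integrable_const _) hgr_int, integral_const] at hmono'
    simp only [probReal_univ, smul_eq_mul, one_mul, mul_one] at hmono'
    linarith
  -- conclude
  have hkl : klDiv μ m = ENNReal.ofReal (∫ x, llr μ m x ∂μ) := by
    rw [klDiv, if_pos ⟨hμm, hint⟩]
  refine ⟨hμm, ?_, ?_⟩
  · rw [hkl]; exact ENNReal.ofReal_ne_top
  · rw [hkl, ENNReal.toReal_ofReal h_nonneg, hI]

/-- **Value of the GAN objective at the optimal discriminator (Theorem 1, key identity).**
With `μ = α.withDensity p`, `ν = α.withDensity q` probability measures and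
`m = (1/2)•μ + (1/2)•ν` their mixture: `μ ≪ m`, `ν ≪ m`, both KL divergences
`klDiv μ m` and `klDiv ν m` are finite, and the GAN objective evaluated at the
optimal discriminator `D* = p/(p+q)` equals `−log 4 + klDiv(μ‖m) + klDiv(ν‖m)`. -/
theorem gan_value_at_optimal_discriminator
    {X : Type*} [MeasurableSpace X] (α : Measure X) [SigmaFinite α]
    (p q : X → ℝ≥0) (hp : Measurable p) (hq : Measurable q)
    (hp1 : ∫⁻ x, (p x : ℝ≥0∞) ∂α = 1) (hq1 : ∫⁻ x, (q x : ℝ≥0∞) ∂α = 1)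
    (h3 : Integrable (fun x => log ((p x : ℝ) / ((p x : ℝ) + (q x : ℝ))))
      (α.withDensity fun x => (p x : ℝ≥0∞)))
    (h4 : Integrable (fun x => log ((q x : ℝ) / ((p x : ℝ) + (q x : ℝ))))
      (α.withDensity fun x => (q x : ℝ≥0∞))) :
    let μ : Measure X := α.withDensity fun x => (p x : ℝ≥0∞)
    let ν : Measure X := α.withDensity fun x => (q x : ℝ≥0∞)
    let m : Measure X := ((1 : ℝ≥0∞) / 2) • μ + ((1 : ℝ≥0∞) / 2) • ν
    μ ≪ m ∧ ν ≪ m ∧ klDiv μ m ≠ ⊤ ∧ klDiv ν m ≠ ⊤ ∧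
      (∫ x, log ((p x : ℝ) / ((p x : ℝ) + (q x : ℝ))) ∂μ)
          + ∫ x, log ((q x : ℝ) / ((p x : ℝ) + (q x : ℝ))) ∂ν =
        -log 4 + (klDiv μ m).toReal + (klDiv ν m).toReal := by
  intro μ ν m
  have hswapfun : (fun x => log ((q x : ℝ) / ((q x : ℝ) + (p x : ℝ))))
      = fun x => log ((q x : ℝ) / ((p x : ℝ) + (q x : ℝ))) := by
    funext x; rw [add_comm]
  have h4' : Integrable (fun x => log ((q x : ℝ) / ((q x : ℝ) + (p x : ℝ))))
      (α.withDensity fun x => (q x : ℝ≥0∞)) := by rw [hswapfun]; exact h4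
  obtain ⟨hA1, hA2, hA3⟩ := gan_aux α p q hp hq hp1 hq1 h3
  obtain ⟨hB1, hB2, hB3⟩ := gan_aux α q p hq hp hq1 hp1 h4'
  have hmswap : ((1:ℝ≥0∞)/2) • (α.withDensity fun x => (q x : ℝ≥0∞))
      + ((1:ℝ≥0∞)/2) • (α.withDensity fun x => (p x : ℝ≥0∞)) = m := add_comm _ _
  rw [hmswap] at hB1 hB2 hB3
  rw [hswapfun] at hB3
  refine ⟨hA1, hB1, hA2, hB2, ?_⟩
  have hlog4 : Real.log 4 = 2 * Real.log 2 := by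
    rw [show (4:ℝ) = 2^2 by norm_num, Real.log_pow]
    push_cast
    ring
  rw [hA3, hB3, hlog4]
  ring
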